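/- Let X be an m×n real matrix with m ≤ n and rank(X) = m. Then ‖(XXᵀ)^{1/2} − (XXᵀ + μI)^{1/2}‖₂ ≤ μ/(2σ_m(X)), where σ_m(X) is the smallest singular value of X, μ > 0, and A^{1/2} denotes the unique positive semidefinite square root of a positive semidefinite symmetric matrix A. -/

import Mathlib

open Matrix BigOperators

/-- Spectral (operator 2-) norm of a real matrix. -/
noncomputable def specNorm {α β : Type*} [Fintype α] [Fintype β]
    (A : Matrix α β ℝ) : ℝ :=
  sSup ((fun x : β → ℝ => Real.sqrt (∑ i, (A.mulVec x i) ^ 2)) ''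
    {x | ∑ j, (x j) ^ 2 = 1})
noncomputable def Matrix.PosSemidef.sqrt {n : Type*} [Fintype n] [DecidableEq n]
    {A : Matrix n n ℝ} (hA : A.PosSemidef) : Matrix n n ℝ :=
  hA.1.eigenvectorUnitary.1 * diagonal ((↑) ∘ (√·) ∘ hA.1.eigenvalues) *
  (star hA.1.eigenvectorUnitary : Matrix n n ℝ)

open scoped MatrixOrder in
lemma psd_eq_sqrt_of_sq_eq {m : ℕ} {A B : Matrix (Fin m) (Fin m) ℝ}
    (hB : B.PosSemidef) (hA : A.PosSemidef) (h : B ^ 2 = A) :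
    B = Matrix.PosSemidef.sqrt hA := by
  have e1 : Matrix.PosSemidef.sqrt hA = cfc Real.sqrt A := by
    rw [hA.1.cfc_eq, IsHermitian.cfc, Unitary.conjStarAlgAut_apply]
    rfl
  rw [e1, ← cfcₙ_eq_cfc (hf0 := Real.sqrt_zero), ← CFC.sqrt_eq_real_sqrt A hA.nonneg]
  exact (CFC.sqrt_unique (by rw [← h, pow_two]) hB.nonneg).symm

lemma ortho_mulVec_sum_sq {m : ℕ} {Q : Matrix (Fin m) (Fin m) ℝ}
    (hQ : Qᵀ * Q = 1) (v : Fin m → ℝ) :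
    ∑ i, (Q.mulVec v i) ^ 2 = ∑ i, (v i) ^ 2 := by
  have h1 : ∑ i, (Q.mulVec v i) ^ 2 = (Q.mulVec v) ⬝ᵥ (Q.mulVec v) := by
    simp [dotProduct, pow_two]
  have h2 : ∑ i, (v i) ^ 2 = v ⬝ᵥ v := by simp [dotProduct, pow_two]
  rw [h1, h2, Matrix.dotProduct_mulVec]
  have hqv : Q.mulVec v = v ᵥ* Qᵀ := (Matrix.vecMul_transpose Q v).symm
  rw [hqv, Matrix.vecMul_vecMul, hQ, Matrix.vecMul_one]

/-- If `X` is `m×n` with `m ≤ n` and full row rank `m`, then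
`‖(XXᵀ)^{1/2} − (XXᵀ + μI)^{1/2}‖₂ ≤ μ/(2σ_m(X))` for `μ > 0`, where `σ_m(X)`
is the smallest singular value of `X` (here given through a sorted spectral
decomposition of `XXᵀ`). -/
theorem stmt3 {m n : ℕ} (hm : 0 < m) (hmn : m ≤ n) (μ : ℝ) (hμ : 0 < μ)
    (X : Matrix (Fin m) (Fin n) ℝ) (hrank : X.rank = m)
    (h1 : (X * Xᵀ).PosSemidef)
    (h2 : (X * Xᵀ + μ • (1 : Matrix (Fin m) (Fin m) ℝ)).PosSemidef)
    (P : Matrix (Fin m) (Fin m) ℝ) (s : Fin m → ℝ)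
    (hP : Pᵀ * P = 1)
    (hspec : X * Xᵀ = P * Matrix.diagonal (fun i => (s i) ^ 2) * Pᵀ)
    (hmono : Antitone s) (hpos : ∀ i, 0 ≤ s i) :
    specNorm (Matrix.PosSemidef.sqrt h1 - Matrix.PosSemidef.sqrt h2) ≤ μ / (2 * s ⟨m - 1, by omega⟩) := by
  have hPP : P * Pᵀ = 1 := mul_eq_one_comm.mp hP
  have hPdet : IsUnit P.det := by
    have h := congrArg Matrix.det hP
    rw [Matrix.det_mul, Matrix.det_transpose, Matrix.det_one] at h
    exact IsUnit.of_mul_eq_one _ h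
  have hPtdet : IsUnit Pᵀ.det := by rwa [Matrix.det_transpose]
  -- all singular values are nonzero
  have hsne : ∀ i, s i ≠ 0 := by
    have hr : (X * Xᵀ).rank = m := by
      rw [Matrix.rank_self_mul_transpose, hrank]
    rw [hspec, Matrix.rank_mul_eq_left_of_isUnit_det _ _ hPtdet,
      Matrix.rank_mul_eq_right_of_isUnit_det _ _ hPdet,
      Matrix.rank_diagonal] at hr
    intro i hi
    have hlt : Fintype.card {j // (s j) ^ 2 ≠ 0} < Fintype.card (Fin m) :=
      Fintype.card_subtype_lt (x := i) (by simp [hi])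
    rw [hr, Fintype.card_fin] at hlt
    omega
  have hσpos : 0 < s ⟨m - 1, by omega⟩ :=
    lt_of_le_of_ne (hpos _) (Ne.symm (hsne _))
  have hσle : ∀ i, s ⟨m - 1, by omega⟩ ≤ s i := fun i => hmono (by
    rw [Fin.le_def]
    exact Nat.le_sub_one_of_lt i.isLt)
  set c : ℝ := μ / (2 * s ⟨m - 1, by omega⟩) with hc
  have hcpos : 0 < c := div_pos hμ (by positivity)
  -- square roots
  set f2 : Fin m → ℝ := fun i => Real.sqrt ((s i) ^ 2 + μ) with hf2
  have hf2sq : ∀ i, (f2 i) ^ 2 = (s i) ^ 2 + μ := fun i =>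
    Real.sq_sqrt (by positivity)
  have hf2nn : ∀ i, 0 ≤ f2 i := fun i => Real.sqrt_nonneg _
  have hconjPSD : ∀ (d : Fin m → ℝ), (∀ i, 0 ≤ d i) →
      (P * Matrix.diagonal d * Pᵀ).PosSemidef := by
    intro d hd
    have := (Matrix.posSemidef_diagonal_iff.mpr hd).mul_mul_conjTranspose_same P
    simpa using this
  have hconjsq : ∀ (d : Fin m → ℝ),
      (P * Matrix.diagonal d * Pᵀ) ^ 2 = P * Matrix.diagonal (fun i => d i ^ 2) * Pᵀ := by
    intro d
    rw [pow_two]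
    calc P * Matrix.diagonal d * Pᵀ * (P * Matrix.diagonal d * Pᵀ)
        = P * Matrix.diagonal d * (Pᵀ * P) * Matrix.diagonal d * Pᵀ := by
          simp only [Matrix.mul_assoc]
      _ = P * (Matrix.diagonal d * Matrix.diagonal d) * Pᵀ := by
          rw [hP]; simp only [Matrix.mul_assoc, Matrix.mul_one]
      _ = P * Matrix.diagonal (fun i => d i ^ 2) * Pᵀ := by
          rw [Matrix.diagonal_mul_diagonal]
          exact congrArg (fun v => P * Matrix.diagonal v * Pᵀ)
            (funext fun i => (pow_two (d i)).symm)
  have hsqrt1 : Matrix.PosSemidef.sqrt h1 = P * Matrix.diagonal s * Pᵀ := by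
    refine (psd_eq_sqrt_of_sq_eq (hconjPSD s hpos) h1 ?_).symm
    rw [hconjsq, hspec]
  have hspec2 : X * Xᵀ + μ • (1 : Matrix (Fin m) (Fin m) ℝ)
      = P * Matrix.diagonal (fun i => (s i) ^ 2 + μ) * Pᵀ := by
    have hone : μ • (1 : Matrix (Fin m) (Fin m) ℝ) = P * (μ • (1 : Matrix (Fin m) (Fin m) ℝ)) * Pᵀ := by
      rw [Matrix.mul_smul, Matrix.smul_mul, Matrix.mul_one, hPP]
    rw [hspec]
    nth_rewrite 1 [hone]
    rw [← Matrix.add_mul, ← Matrix.mul_add]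
    congr 2
    rw [Matrix.smul_one_eq_diagonal, Matrix.diagonal_add]
  have hsqrt2 : Matrix.PosSemidef.sqrt h2 = P * Matrix.diagonal f2 * Pᵀ := by
    refine (psd_eq_sqrt_of_sq_eq (hconjPSD f2 hf2nn) h2 ?_).symm
    rw [hconjsq, hspec2]
    exact congrArg (fun v => P * Matrix.diagonal v * Pᵀ) (funext hf2sq)
  set g : Fin m → ℝ := fun i => s i - f2 i with hg
  have hA : Matrix.PosSemidef.sqrt h1 - Matrix.PosSemidef.sqrt h2 = P * Matrix.diagonal g * Pᵀ := by
    rw [hsqrt1, hsqrt2, ← Matrix.sub_mul, ← Matrix.mul_sub, Matrix.diagonal_sub]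
  -- bound on g
  have hgbound : ∀ i, g i ^ 2 ≤ c ^ 2 := by
    intro i
    have hsi : 0 < s i := lt_of_lt_of_le hσpos (hσle i)
    have hle1 : s i ≤ f2 i := by
      rw [hf2]
      calc s i = Real.sqrt ((s i) ^ 2) := (Real.sqrt_sq (hpos i)).symm
        _ ≤ Real.sqrt ((s i) ^ 2 + μ) := Real.sqrt_le_sqrt (by linarith)
    have hkey : f2 i - s i ≤ c := by
      have h2s : 2 * s i * (f2 i - s i) ≤ μ := by
        nlinarith [hf2sq i, hf2nn i, sq_nonneg (f2 i - s i)]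
      have hstep : f2 i - s i ≤ μ / (2 * s i) := by
        rw [le_div_iff₀ (by positivity)]
        linarith [h2s]
      refine hstep.trans ?_
      rw [hc]
      gcongr
      exact hσle i
    have : g i ^ 2 = (f2 i - s i) ^ 2 := by rw [hg]; ring
    rw [this]
    have h0 : 0 ≤ f2 i - s i := by linarith
    nlinarith [hcpos.le]
  -- main bound
  rw [hA]
  apply Real.sSup_le _ hcpos.le
  rintro y ⟨x, hx, rfl⟩
  simp only [Set.mem_setOf_eq] at hx
  have hrw : ∀ i, (P * Matrix.diagonal g * Pᵀ).mulVec x i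
      = P.mulVec ((Matrix.diagonal g).mulVec (Pᵀ.mulVec x)) i := by
    intro i
    rw [← Matrix.mulVec_mulVec, ← Matrix.mulVec_mulVec]
  have hsum : ∑ i, ((P * Matrix.diagonal g * Pᵀ).mulVec x i) ^ 2 ≤ c ^ 2 := by
    have e1 : ∑ i, ((P * Matrix.diagonal g * Pᵀ).mulVec x i) ^ 2
        = ∑ i, ((Matrix.diagonal g).mulVec (Pᵀ.mulVec x) i) ^ 2 := by
      rw [Finset.sum_congr rfl (fun i _ => by rw [hrw i])]
      exact ortho_mulVec_sum_sq hP _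
    have hPt : (Pᵀ)ᵀ * Pᵀ = 1 := by rw [Matrix.transpose_transpose, hPP]
    have e2 : ∑ i, (Pᵀ.mulVec x i) ^ 2 = 1 := by
      rw [ortho_mulVec_sum_sq hPt x, hx]
    rw [e1]
    calc ∑ i, ((Matrix.diagonal g).mulVec (Pᵀ.mulVec x) i) ^ 2
        = ∑ i, (g i) ^ 2 * (Pᵀ.mulVec x i) ^ 2 := by
          refine Finset.sum_congr rfl (fun i _ => ?_)
          rw [Matrix.mulVec_diagonal]; ring
      _ ≤ ∑ i, c ^ 2 * (Pᵀ.mulVec x i) ^ 2 := by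
          refine Finset.sum_le_sum (fun i _ => ?_)
          exact mul_le_mul_of_nonneg_right (hgbound i) (sq_nonneg _)
      _ = c ^ 2 := by rw [← Finset.mul_sum, e2, mul_one]
  calc Real.sqrt (∑ i, ((P * Matrix.diagonal g * Pᵀ).mulVec x i) ^ 2)
      ≤ Real.sqrt (c ^ 2) := Real.sqrt_le_sqrt hsum
    _ = c := Real.sqrt_sq hcpos.le
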